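/- arXiv:2402.13394 — 2 statements merged into one kernel-verified Lean document; each statement's English description precedes it below -/
import Mathlib

section
/- Let (M, λ) be a free metabolic form of rank 2k with lagrangian L ≤ M. Then M has a basis e_1,…,e_k, f_1,…,f_k such that L is generated by e_1,…,e_k, and in this basis λ is given by the block matrix [[0, I_k],[I_k, D]], where I_k is the k×k identity matrix and D is a diagonal matrix each of whose diagonal entries is 0 or 1. -/
open Module

/-- Let `(M, λ)` be a free metabolic form of rank `2k` with lagrangian `L ≤ M`.
Then `M` has a basis `e_1,…,e_k, f_1,…,f_k` such that `L` is generated by the `e_i`,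
and in this basis `λ` is given by the block matrix `[[0, I_k],[I_k, D]]` where `D` is
diagonal with each diagonal entry `0` or `1`. -/
theorem metabolic_basis
    (M : Type) [AddCommGroup M] [Module.Finite ℤ M] [Module.Free ℤ M]
    (B : LinearMap.BilinForm ℤ M)
    (hsymm : ∀ x y, B x y = B y x)
    (hns : Function.Bijective B)
    (k : ℕ) (hrk : Module.finrank ℤ M = 2 * k)
    (L : Submodule ℤ M)
    (hLsummand : ∃ C : Submodule ℤ M, IsCompl L C)
    (hLrank : Module.finrank ℤ L = k)
    (hLlagr : ∀ x ∈ L, ∀ y ∈ L, B x y = 0) :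
    ∃ (b : Basis ((Fin k) ⊕ (Fin k)) ℤ M) (d : Fin k → ℤ),
      (∀ i, d i = 0 ∨ d i = 1) ∧
      L = Submodule.span ℤ (Set.range fun i => b (Sum.inl i)) ∧
      (∀ i j, B (b (Sum.inl i)) (b (Sum.inl j)) = 0) ∧
      (∀ i j, B (b (Sum.inl i)) (b (Sum.inr j)) = if i = j then 1 else 0) ∧
      (∀ i j, B (b (Sum.inr i)) (b (Sum.inl j)) = if i = j then 1 else 0) ∧
      (∀ i j, B (b (Sum.inr i)) (b (Sum.inr j)) = if i = j then d i else 0) := by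
  classical
  obtain ⟨C, hC⟩ := hLsummand
  have hCrank : Module.finrank ℤ C = k := by
    have h1 := (Submodule.prodEquivOfIsCompl L C hC).finrank_eq
    rw [Module.finrank_prod] at h1
    omega
  let eb : Basis (Fin k) ℤ L := (Module.Free.chooseBasis ℤ L).reindex
    (Fintype.equivFinOfCardEq (by rw [← Module.finrank_eq_card_chooseBasisIndex, hLrank]))
  let cb : Basis (Fin k) ℤ C := (Module.Free.chooseBasis ℤ C).reindex
    (Fintype.equivFinOfCardEq (by rw [← Module.finrank_eq_card_chooseBasisIndex, hCrank]))
  set e : Fin k → M := fun i => ((eb i : L) : M) with he_def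
  have heL : ∀ i, e i ∈ L := fun i => (eb i).2
  have hee : ∀ i j, B (e i) (e j) = 0 := fun i j => hLlagr _ (heL i) _ (heL j)
  -- L is spanned by the e's
  have hLspan : L = Submodule.span ℤ (Set.range e) := by
    conv_lhs => rw [← Submodule.map_subtype_top L, ← eb.span_eq, Submodule.map_span]
    rw [← Set.range_comp]
    rfl
  -- the inverse of B
  set Beq := LinearEquiv.ofBijective B hns with hBeq
  have hBsymm : ∀ (ψ : Module.Dual ℤ M), B (Beq.symm ψ) = ψ := fun ψ => Beq.apply_symm_apply ψ
  -- the projection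
  set π := L.projectionOnto C hC with hπ
  -- the map to the dual of L
  set β : M →ₗ[ℤ] Module.Dual ℤ L := L.subtype.dualMap ∘ₗ B with hβ
  have hβL : ∀ l ∈ L, β l = 0 := by
    intro l hl
    ext x
    exact hLlagr l hl x x.2
  have hβsurj : Function.Surjective β := by
    intro φ
    refine ⟨Beq.symm (φ ∘ₗ π), ?_⟩
    ext l
    simp only [hβ, LinearMap.comp_apply, LinearMap.dualMap_apply, hBsymm, Submodule.coe_subtype,
      hπ, Submodule.projectionOnto_apply_left]
  -- injectivity of β restricted to C
  set F : C →ₗ[ℤ] Module.Dual ℤ L := β ∘ₗ C.subtype with hF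
  have hFsurj : Function.Surjective F := by
    intro φ
    obtain ⟨x, hx⟩ := hβsurj φ
    have hxmem : x ∈ L ⊔ C := by rw [hC.sup_eq_top]; trivial
    obtain ⟨l, hl, c, hc, hsum⟩ := Submodule.mem_sup.1 hxmem
    refine ⟨⟨c, hc⟩, ?_⟩
    have : β c = β x - β l := by rw [← hsum]; simp
    simp only [hF, LinearMap.comp_apply, Submodule.coe_subtype, this, hx, hβL l hl, sub_zero]
  have hFinj : Function.Injective F := by
    set iso := (eb.dualBasis.equiv cb (Equiv.refl _)) with hiso
    set G : C →ₗ[ℤ] C := iso.toLinearMap ∘ₗ F with hG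
    have hGsurj : Function.Surjective G := iso.surjective.comp hFsurj
    have hGinj : Function.Injective G :=
      OrzechProperty.injective_of_surjective_endomorphism G hGsurj
    intro a b hab
    exact hGinj (by simp [hG, LinearMap.comp_apply, hab])
  -- orthogonal complement of L is L
  have hperp : ∀ y : M, (∀ l ∈ L, B y l = 0) → y ∈ L := by
    intro y hy
    have hβy : β y = 0 := by ext l; exact hy l l.2
    have hymem : y ∈ L ⊔ C := by rw [hC.sup_eq_top]; trivial
    obtain ⟨l, hl, c, hc, hsum⟩ := Submodule.mem_sup.1 hymem
    have hβc : β c = 0 := by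
      have : β c = β y - β l := by rw [← hsum]; simp
      rw [this, hβy, hβL l hl, sub_zero]
    have : F ⟨c, hc⟩ = 0 := by
      simp only [hF, LinearMap.comp_apply, Submodule.coe_subtype, hβc]
    have hc0 : (⟨c, hc⟩ : C) = 0 := hFinj (by rw [this, map_zero])
    have : c = 0 := congrArg Subtype.val hc0
    rw [← hsum, this, add_zero]
    exact hl
  -- dual family
  obtain ⟨f', hf'e⟩ : ∃ f' : Fin k → M, ∀ i j, B (f' i) (e j) = if i = j then 1 else 0 := by
    refine ⟨fun i => Beq.symm ((eb.coord i) ∘ₗ π), fun i j => ?_⟩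
    have : B (Beq.symm ((eb.coord i) ∘ₗ π)) (e j) = (eb.coord i) (π (e j)) := by
      rw [hBsymm]; rfl
    rw [this, he_def]
    simp only [hπ, Submodule.projectionOnto_apply_left, Basis.coord_apply,
      Basis.repr_self, Finsupp.single_apply]
    exact if_congr eq_comm rfl rfl
  -- adjust the dual family
  set A : Fin k → Fin k → ℤ := fun i j => B (f' i) (f' j) with hA
  have hAsymm : ∀ i j, A i j = A j i := fun i j => hsymm _ _
  set cc : Fin k → Fin k → ℤ := fun i j =>
    if i < j then A i j else if i = j then A i i / 2 else 0 with hcc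
  set f : Fin k → M := fun i => f' i - ∑ j, cc i j • e j with hf
  set d : Fin k → ℤ := fun i => A i i % 2 with hd
  have hd01 : ∀ i, d i = 0 ∨ d i = 1 := fun i => Int.emod_two_eq_zero_or_one _
  have hfe : ∀ i j, B (f i) (e j) = if i = j then 1 else 0 := by
    intro i j
    simp only [hf, map_sub, map_sum, map_smul, LinearMap.sub_apply, LinearMap.coe_sum,
      Finset.sum_apply, LinearMap.smul_apply, smul_eq_mul, hee, mul_zero,
      Finset.sum_const_zero, sub_zero, hf'e]
  have hef : ∀ i j, B (e i) (f j) = if i = j then 1 else 0 := by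
    intro i j
    rw [hsymm, hfe]
    exact if_congr eq_comm rfl rfl
  have hff' : ∀ i j, B (f i) (f j) = A i j - cc i j - cc j i := by
    intro i j
    have h1 : B (f i) (f j) = B (f i) (f' j) - ∑ m, cc j m * B (f i) (e m) := by
      conv_lhs => rw [show f j = f' j - ∑ m, cc j m • e m from rfl]
      simp only [map_sub, map_sum, map_smul, smul_eq_mul]
    have h2 : B (f i) (f' j) = A i j - ∑ l, cc i l * B (e l) (f' j) := by
      conv_lhs => rw [show f i = f' i - ∑ l, cc i l • e l from rfl]
      simp only [map_sub, map_sum, map_smul, LinearMap.sub_apply, LinearMap.coe_sum,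
        Finset.sum_apply, LinearMap.smul_apply, smul_eq_mul]
      rfl
    have h3 : ∑ m, cc j m * B (f i) (e m) = cc j i := by
      simp [hfe, mul_ite, Finset.sum_ite_eq']
    have h4 : ∑ l, cc i l * B (e l) (f' j) = cc i j := by
      have hl : ∀ l, B (e l) (f' j) = if j = l then 1 else 0 := by
        intro l; rw [hsymm, hf'e]
      simp [hl, mul_ite, Finset.sum_ite_eq]
    rw [h1, h2, h3, h4]
  have hff : ∀ i j, B (f i) (f j) = if i = j then d i else 0 := by
    intro i j
    rw [hff']
    rcases lt_trichotomy i j with hij | hij | hij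
    · have hji : ¬ j < i := not_lt.2 hij.le
      have hne : i ≠ j := ne_of_lt hij
      have hccij : cc i j = A i j := by simp [hcc, hij]
      have hccji : cc j i = 0 := by simp [hcc, hji, hne.symm]
      rw [hccij, hccji, if_neg hne]
      ring
    · subst hij
      have hccii : cc i i = A i i / 2 := by simp [hcc]
      have hdi : d i = A i i % 2 := rfl
      rw [hccii, if_pos rfl, hdi]
      omega
    · have hij' : ¬ i < j := not_lt.2 hij.le
      have hne : i ≠ j := (ne_of_lt hij).symm
      have hccij : cc i j = 0 := by simp [hcc, hij', hne]
      have hccji : cc j i = A j i := by simp [hcc, hij]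
      rw [hccij, hccji, hAsymm j i, if_neg hne]
      ring
  -- the full family
  set g : (Fin k ⊕ Fin k) → M := Sum.elim e f with hg
  have heind : LinearIndependent ℤ e :=
    eb.linearIndependent.map' L.subtype L.ker_subtype
  have hindep : LinearIndependent ℤ g := by
    rw [Fintype.linearIndependent_iff]
    intro a ha
    rw [Fintype.sum_sum_type] at ha
    have hbr : ∀ jj, a (Sum.inr jj) = 0 := by
      intro jj
      have h0 := congrArg (fun z => B z (e jj)) ha
      simp only [map_add, map_sum, map_smul, LinearMap.add_apply, LinearMap.coe_sum,
        Finset.sum_apply, LinearMap.smul_apply, smul_eq_mul, map_zero, LinearMap.zero_apply,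
        hg, Sum.elim_inl, Sum.elim_inr, hee, hfe, mul_zero, Finset.sum_const_zero,
        mul_ite, mul_one, zero_add] at h0
      simpa [Finset.sum_ite_eq'] using h0
    have ha' : ∑ i, a (Sum.inl i) • e i = 0 := by
      simp only [hbr, zero_smul, Finset.sum_const_zero, add_zero] at ha
      simpa [hg] using ha
    have hal := Fintype.linearIndependent_iff.1 heind (fun i => a (Sum.inl i)) ha'
    rintro (i | i)
    · exact hal i
    · exact hbr i
  have hspan : ⊤ ≤ Submodule.span ℤ (Set.range g) := by
    intro x _
    set y := x - ∑ i, (B x (e i)) • f i with hy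
    have hyL : y ∈ L := by
      apply hperp
      intro l hl
      have hkerL : ∀ j, B y (e j) = 0 := by
        intro j
        simp only [hy, map_sub, map_sum, map_smul, LinearMap.sub_apply, LinearMap.coe_sum,
          Finset.sum_apply, LinearMap.smul_apply, smul_eq_mul, hfe, mul_ite, mul_one, mul_zero]
        simp [Finset.sum_ite_eq']
      rw [hLspan] at hl
      have hsub : Set.range e ⊆ (LinearMap.ker (B y) : Set M) := by
        rintro _ ⟨j, rfl⟩
        exact hkerL j
      exact (Submodule.span_le.2 hsub) hl
    have hx : x = y + ∑ i, (B x (e i)) • f i := by rw [hy]; abel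
    rw [hx]
    apply Submodule.add_mem
    · have hLle : L ≤ Submodule.span ℤ (Set.range g) := by
        rw [hLspan]
        apply Submodule.span_mono
        rintro _ ⟨j, rfl⟩
        exact ⟨Sum.inl j, rfl⟩
      exact hLle hyL
    · apply Submodule.sum_mem
      intro i _
      exact Submodule.smul_mem _ _ (Submodule.subset_span ⟨Sum.inr i, rfl⟩)
  set b : Basis (Fin k ⊕ Fin k) ℤ M := Basis.mk hindep hspan with hb
  have hbinl : ∀ i, b (Sum.inl i) = e i := fun i => by rw [hb, Basis.mk_apply]; rfl
  have hbinr : ∀ i, b (Sum.inr i) = f i := fun i => by rw [hb, Basis.mk_apply]; rfl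
  refine ⟨b, d, hd01, ?_, ?_, ?_, ?_, ?_⟩
  · have : (fun i => b (Sum.inl i)) = e := funext hbinl
    rw [this]
    exact hLspan
  · intro i j; rw [hbinl, hbinl]; exact hee i j
  · intro i j; rw [hbinl, hbinr]; exact hef i j
  · intro i j; rw [hbinr, hbinl]; exact hfe i j
  · intro i j; rw [hbinr, hbinr]; exact hff i j
end

section
/- Let F, G, A be finitely generated abelian groups with F and G free, and let f : F → A and g : G → A be surjective homomorphisms. Then (a) there exist free abelian groups F', G' and an isomorphism h : F ⊕ F' → G ⊕ G' such that (f + 0) = (g + 0) ∘ h as homomorphisms F ⊕ F' → A. (b) If moreover A is free and rk F = rk G, then there is an isomorphism h : F → G with f = g ∘ h. -/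
/-- Let `F, G, A` be finitely generated abelian groups with `F` and `G` free, and let
`f : F → A`, `g : G → A` be surjective homomorphisms. Then
(a) there exist free abelian groups `F' = ℤ^n`, `G' = ℤ^m` and an isomorphism
`h : F ⊕ F' → G ⊕ G'` with `(f + 0) = (g + 0) ∘ h`;
(b) if moreover `A` is free and `rk F = rk G`, then there is an isomorphism `h : F → G`
with `f = g ∘ h`. -/
theorem surjective_hom_stable_iso
    (F G A : Type) [AddCommGroup F] [AddCommGroup G] [AddCommGroup A]
    [Module.Finite ℤ F] [Module.Finite ℤ G] [Module.Finite ℤ A]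
    [Module.Free ℤ F] [Module.Free ℤ G]
    (f : F →+ A) (g : G →+ A)
    (hf : Function.Surjective f) (hg : Function.Surjective g) :
    (∃ (n m : ℕ) (h : (F × (Fin n → ℤ)) ≃+ (G × (Fin m → ℤ))),
        ∀ p, f p.1 = g (h p).1) ∧
    (Module.Free ℤ A → Module.finrank ℤ F = Module.finrank ℤ G →
        ∃ h : F ≃+ G, ∀ x, f x = g (h x)) := by
  set f' := f.toIntLinearMap with hf'
  set g' := g.toIntLinearMap with hg'
  obtain ⟨φ, hφ⟩ := Module.projective_lifting_property g' f' hg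
  obtain ⟨ψ, hψ⟩ := Module.projective_lifting_property f' g' hf
  have hφ' : ∀ x, g (φ x) = f x := fun x => LinearMap.congr_fun hφ x
  have hψ' : ∀ y, f (ψ y) = g y := fun y => LinearMap.congr_fun hψ y
  constructor
  · -- part (a)
    let h0 : (F × G) ≃+ (G × F) :=
      { toFun := fun p => (φ (p.1 + ψ p.2) - p.2, p.1 + ψ p.2)
        invFun := fun q => (q.2 - ψ (φ q.2 - q.1), φ q.2 - q.1)
        left_inv := by
          intro p
          ext <;> simp <;> abel
        right_inv := by
          intro q
          ext <;> simp <;> abel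
        map_add' := by
          intro p q
          ext <;> simp [map_add] <;> abel }
    let eFb : F ≃ₗ[ℤ] (Fin (Module.finrank ℤ F) → ℤ) := (Module.finBasis ℤ F).equivFun
    let eGb : G ≃ₗ[ℤ] (Fin (Module.finrank ℤ G) → ℤ) := (Module.finBasis ℤ G).equivFun
    refine ⟨Module.finrank ℤ G, Module.finrank ℤ F,
      ((AddEquiv.refl F).prodCongr eGb.symm.toAddEquiv).trans
        (h0.trans ((AddEquiv.refl G).prodCongr eFb.toAddEquiv)), ?_⟩
    intro p
    show f p.1 = g (φ (p.1 + ψ (eGb.symm p.2)) - eGb.symm p.2)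
    simp [map_sub, map_add, hφ', hψ']
  · -- part (b)
    intro hA hrk
    obtain ⟨s, hs⟩ := Module.projective_lifting_property f' (LinearMap.id (M := A)) hf
    obtain ⟨t, ht⟩ := Module.projective_lifting_property g' (LinearMap.id (M := A)) hg
    have hs' : ∀ a, f (s a) = a := fun a => LinearMap.congr_fun hs a
    have ht' : ∀ a, g (t a) = a := fun a => LinearMap.congr_fun ht a
    set K := LinearMap.ker f' with hK
    set L := LinearMap.ker g' with hL
    have memK : ∀ x : F, x - s (f x) ∈ K := fun x => by
      have : f' (x - s (f x)) = 0 := by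
        simp only [map_sub]
        show f x - f (s (f x)) = 0
        rw [hs', sub_self]
      exact this
    have memL : ∀ y : G, y - t (g y) ∈ L := fun y => by
      have : g' (y - t (g y)) = 0 := by
        simp only [map_sub]
        show g y - g (t (g y)) = 0
        rw [ht', sub_self]
      exact this
    obtain ⟨rK, bK⟩ := Submodule.basisOfPid (Module.finBasis ℤ F) K
    obtain ⟨rL, bL⟩ := Submodule.basisOfPid (Module.finBasis ℤ G) L
    have : Module.Free ℤ K := Module.Free.of_basis bK
    have : Module.Finite ℤ K := Module.Finite.of_basis bK
    have : Module.Free ℤ L := Module.Free.of_basis bL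
    have : Module.Finite ℤ L := Module.Finite.of_basis bL
    -- F ≃ₗ K × A
    let eF : F ≃ₗ[ℤ] K × A := by
      refine
        { toFun := fun x => (⟨x - s (f x), memK x⟩, f x)
          invFun := fun p => (p.1 : F) + s p.2
          map_add' := ?_
          map_smul' := ?_
          left_inv := ?_
          right_inv := ?_ }
      · intro x y; ext <;> simp [map_add] <;> abel
      · intro c x; ext <;> simp [map_smul] <;> module
      · intro x; simp
      · rintro ⟨⟨k, hk⟩, a⟩
        have hk0 : f k = 0 := hk
        ext <;> simp [hk0, hs']
    let eG : G ≃ₗ[ℤ] L × A := by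
      refine
        { toFun := fun y => (⟨y - t (g y), memL y⟩, g y)
          invFun := fun p => (p.1 : G) + t p.2
          map_add' := ?_
          map_smul' := ?_
          left_inv := ?_
          right_inv := ?_ }
      · intro x y; ext <;> simp [map_add] <;> abel
      · intro c x; ext <;> simp [map_smul] <;> module
      · intro x; simp
      · rintro ⟨⟨k, hk⟩, a⟩
        have hk0 : g k = 0 := hk
        ext <;> simp [hk0, ht']
    have hrkK : Module.finrank ℤ K = Module.finrank ℤ L := by
      have h1 : Module.finrank ℤ F = Module.finrank ℤ K + Module.finrank ℤ A := by
        rw [eF.finrank_eq, Module.finrank_prod]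
      have h2 : Module.finrank ℤ G = Module.finrank ℤ L + Module.finrank ℤ A := by
        rw [eG.finrank_eq, Module.finrank_prod]
      omega
    -- iso K ≃ₗ L
    let κ : K ≃ₗ[ℤ] L :=
      (Module.finBasis ℤ K).equiv (Module.finBasis ℤ L) (finCongr hrkK)
    refine ⟨(eF.trans ((κ.prodCongr (LinearEquiv.refl ℤ A)).trans eG.symm)).toAddEquiv, ?_⟩
    intro x
    have hval : (eF.trans ((κ.prodCongr (LinearEquiv.refl ℤ A)).trans eG.symm)).toAddEquiv x
        = ((κ ⟨x - s (f x), memK x⟩ : L) : G) + t (f x) := rfl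
    rw [hval, map_add]
    have hg0 : g ((κ ⟨x - s (f x), memK x⟩ : L) : G) = 0 :=
      (κ ⟨x - s (f x), memK x⟩).2
    rw [hg0, ht', zero_add]
end
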